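/- In a pseudosymmetric braided monoidal category C, for every object V the braiding component c_{V,V} : V ⊗ V → V ⊗ V is a pseudosymmetric Yang–Baxter operator, i.e. it satisfies both the Yang–Baxter dodecagon for c_{V,V} and the mixed dodecagon with c_{V,V}⁻¹ in the middle positions. -/
import Mathlib


open CategoryTheory MonoidalCategory

section Aux

variable {D : Type*} [CategoryTheory.Category D] {X : D}

/-- Abstract group-theoretic fact: if two automorphisms satisfy the braid
relation and their squares commute, they satisfy the mixed braid relation. -/
lemma mixed_of_braid_of_sq_comm (f g : X ≅ X)
    (hYB : f.hom ≫ g.hom ≫ f.hom = g.hom ≫ f.hom ≫ g.hom)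
    (hC : f.hom ≫ f.hom ≫ g.hom ≫ g.hom = g.hom ≫ g.hom ≫ f.hom ≫ f.hom) :
    f.hom ≫ g.inv ≫ f.hom = g.hom ≫ f.inv ≫ g.hom := by
  -- conjugation form of the braid relation: g⁻¹ f g = f g f⁻¹
  have hconj : g.inv ≫ f.hom ≫ g.hom = f.hom ≫ g.hom ≫ f.inv := by
    rw [← cancel_mono f.hom]
    simp [hYB]
  -- squares anticommute form: f f g⁻¹ g⁻¹ = g⁻¹ g⁻¹ f f
  have hC' : f.hom ≫ f.hom ≫ g.inv ≫ g.inv = g.inv ≫ g.inv ≫ f.hom ≫ f.hom := by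
    rw [← cancel_mono g.hom, ← cancel_mono g.hom, ← cancel_epi g.hom, ← cancel_epi g.hom]
    simp only [CategoryTheory.Category.assoc, CategoryTheory.Iso.hom_inv_id,
      CategoryTheory.Iso.hom_inv_id_assoc, CategoryTheory.Category.comp_id,
      CategoryTheory.Iso.inv_hom_id, CategoryTheory.Iso.inv_hom_id_assoc]
    exact hC.symm
  calc f.hom ≫ g.inv ≫ f.hom
      = f.inv ≫ (f.hom ≫ f.hom ≫ g.inv ≫ g.inv) ≫ g.hom ≫ f.hom := by simp
    _ = f.inv ≫ (g.inv ≫ g.inv ≫ f.hom ≫ f.hom) ≫ g.hom ≫ f.hom := by rw [hC']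
    _ = f.inv ≫ g.inv ≫ g.inv ≫ f.hom ≫ (f.hom ≫ g.hom ≫ f.hom) := by simp
    _ = f.inv ≫ g.inv ≫ g.inv ≫ f.hom ≫ (g.hom ≫ f.hom ≫ g.hom) := by rw [hYB]
    _ = f.inv ≫ g.inv ≫ (g.inv ≫ f.hom ≫ g.hom) ≫ f.hom ≫ g.hom := by simp
    _ = f.inv ≫ g.inv ≫ (f.hom ≫ g.hom ≫ f.inv) ≫ f.hom ≫ g.hom := by rw [hconj]
    _ = f.inv ≫ (g.inv ≫ f.hom ≫ g.hom) ≫ g.hom := by simp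
    _ = f.inv ≫ (f.hom ≫ g.hom ≫ f.inv) ≫ g.hom := by rw [hconj]
    _ = g.hom ≫ f.inv ≫ g.hom := by simp

end Aux

/-- In a pseudosymmetric braided monoidal category (i.e. one whose double
braidings `T_{X,Y} = c_{Y,X}c_{X,Y}` commute in the appropriate sense), for
every object `V` the braiding `c_{V,V}` is a pseudosymmetric Yang–Baxter
operator on `V`: it satisfies both the Yang–Baxter dodecagon and the mixed
dodecagon with `c_{V,V}⁻¹` in the middle positions. -/
theorem braiding_is_pseudosymmetric_YangBaxter_operator
    {C : Type*} [Category C] [MonoidalCategory C] [BraidedCategory C]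
    (hps : ∀ U V W : C,
      ((β_ U V).hom ≫ (β_ V U).hom) ▷ W ≫ (α_ U V W).hom ≫
        U ◁ ((β_ V W).hom ≫ (β_ W V).hom) ≫ (α_ U V W).inv =
      (α_ U V W).hom ≫ U ◁ ((β_ V W).hom ≫ (β_ W V).hom) ≫ (α_ U V W).inv ≫
        ((β_ U V).hom ≫ (β_ V U).hom) ▷ W) :
    ∀ V : C,
      ((β_ V V).hom ▷ V ≫ (α_ V V V).hom ≫ V ◁ (β_ V V).hom ≫ (α_ V V V).inv ≫
          (β_ V V).hom ▷ V ≫ (α_ V V V).hom =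
        (α_ V V V).hom ≫ V ◁ (β_ V V).hom ≫ (α_ V V V).inv ≫ (β_ V V).hom ▷ V ≫
          (α_ V V V).hom ≫ V ◁ (β_ V V).hom) ∧
      ((β_ V V).hom ▷ V ≫ (α_ V V V).hom ≫ V ◁ (β_ V V).inv ≫ (α_ V V V).inv ≫
          (β_ V V).hom ▷ V ≫ (α_ V V V).hom =
        (α_ V V V).hom ≫ V ◁ (β_ V V).hom ≫ (α_ V V V).inv ≫ (β_ V V).inv ▷ V ≫
          (α_ V V V).hom ≫ V ◁ (β_ V V).hom) := by
  intro V
  set f : (V ⊗ V) ⊗ V ≅ (V ⊗ V) ⊗ V := whiskerRightIso (β_ V V) V with hf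
  set g : (V ⊗ V) ⊗ V ≅ (V ⊗ V) ⊗ V :=
    α_ V V V ≪≫ whiskerLeftIso V (β_ V V) ≪≫ (α_ V V V).symm with hg
  have hYB : f.hom ≫ g.hom ≫ f.hom = g.hom ≫ f.hom ≫ g.hom := by
    simp only [hf, hg, Iso.trans_hom, Iso.symm_hom, whiskerRightIso_hom, whiskerLeftIso_hom]
    rw [← cancel_epi (α_ V V V).inv, ← cancel_mono (α_ V V V).hom]
    simpa [CategoryTheory.Category.assoc] using BraidedCategory.yang_baxter V V V
  have hC : f.hom ≫ f.hom ≫ g.hom ≫ g.hom = g.hom ≫ g.hom ≫ f.hom ≫ f.hom := by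
    have := hps V V V
    simp only [MonoidalCategory.comp_whiskerRight, MonoidalCategory.whiskerLeft_comp] at this
    simp only [hf, hg, Iso.trans_hom, Iso.symm_hom, whiskerRightIso_hom, whiskerLeftIso_hom]
    calc f.hom ≫ f.hom ≫ g.hom ≫ g.hom
        = ((β_ V V).hom ▷ V ≫ (β_ V V).hom ▷ V ≫ (α_ V V V).hom ≫
            V ◁ (β_ V V).hom ≫ V ◁ (β_ V V).hom ≫ (α_ V V V).inv) := by
          simp [hf, hg]
      _ = (α_ V V V).hom ≫ V ◁ (β_ V V).hom ≫ V ◁ (β_ V V).hom ≫ (α_ V V V).inv ≫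
            (β_ V V).hom ▷ V ≫ (β_ V V).hom ▷ V := by
          simpa [CategoryTheory.Category.assoc] using this
      _ = g.hom ≫ g.hom ≫ f.hom ≫ f.hom := by simp [hf, hg]
  have key := mixed_of_braid_of_sq_comm f g hYB hC
  constructor
  · have := congrArg (· ≫ (α_ V V V).hom) hYB
    simpa [hf, hg, CategoryTheory.Category.assoc] using this
  · have := congrArg (· ≫ (α_ V V V).hom) key
    simpa [hf, hg, CategoryTheory.Category.assoc] using this
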